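/- For every rejection cost d ∈ (0, 1/2) and every bandwidth ρ ≥ 0 lying outside the interval [(1 − H(d))/(1 − d), (H(d) − d)/d] (i.e., ρ < (1 − H(d))/(1 − d) or ρ > (H(d) − d)/d), the double hinge loss fails to upper-bound the 0–d–1 loss: there exists a margin t ∈ ℝ with L_DH(t) < L_{0-d-1}(t, ρ). -/

import Mathlib

/-- The 0-d-1 loss on margin `t` with bandwidth `ρ` and rejection cost `d`. -/
noncomputable def L0d1 (d ρ t : ℝ) : ℝ :=
  if t < -ρ then 1 else if t ≤ ρ then d else 0

/-- Binary entropy `H(d)`. -/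
noncomputable def Hent (d : ℝ) : ℝ := -d * Real.log d - (1 - d) * Real.log (1 - d)

/-- The double hinge loss for rejection cost `d`. -/
noncomputable def LDH (d t : ℝ) : ℝ :=
  max (-(1 - d) * t + Hent d) (max (-d * t + Hent d) 0)

theorem stmt_19 (d ρ : ℝ) (hd : d ∈ Set.Ioo (0 : ℝ) (1/2)) (hρ0 : 0 ≤ ρ)
    (hρ : ρ < (1 - Hent d) / (1 - d) ∨ (Hent d - d) / d < ρ) :
    ∃ t : ℝ, LDH d t < L0d1 d ρ t := by
  obtain ⟨hd0, hd2⟩ := hd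
  have h1d : (0:ℝ) < 1 - d := by linarith
  rcases hρ with h | h
  · -- ρ < (1 - H)/(1-d)
    set H := Hent d with hH
    set X := (1 - H) / (1 - d) with hXdef
    have hX : (1 - d) * X = 1 - H := by
      rw [hXdef]
      field_simp [h1d.ne']
    refine ⟨-((ρ + X) / 2), ?_⟩
    have htlt : -((ρ + X) / 2) < -ρ := by
      have : ρ < X := h
      linarith
    have hL : L0d1 d ρ (-((ρ + X) / 2)) = 1 := by
      simp [L0d1, htlt]
    rw [hL]
    have hXpos : 0 < X := lt_of_le_of_lt hρ0 h
    have hm : (ρ + X) / 2 < X := by linarith [h]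
    have hmpos : 0 < (ρ + X) / 2 := by linarith
    have h1 : -(1 - d) * (-((ρ + X) / 2)) + H < 1 := by nlinarith
    have h2 : -d * (-((ρ + X) / 2)) + H < 1 := by nlinarith
    simp only [LDH]
    exact max_lt h1 (max_lt h2 one_pos)
  · -- (H - d)/d < ρ, take t = ρ
    refine ⟨ρ, ?_⟩
    have hL : L0d1 d ρ ρ = d := by
      have : ¬ ρ < -ρ := by linarith
      simp [L0d1, this]
    rw [hL]
    have hdρ : Hent d - d < d * ρ := by
      have := (div_lt_iff₀ hd0).mp h
      linarith
    have h2 : -d * ρ + Hent d < d := by nlinarith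
    have h1 : -(1 - d) * ρ + Hent d < d := by nlinarith
    simp only [LDH]
    exact max_lt h1 (max_lt h2 hd0)
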